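/- Let a ∈ C¹([-1,1]) be positive on (-1,1), vanish at ±1, with A(x) = ∫₀ˣ ds/a(s) ∈ L¹(-1,1). Then for every R > 0, sup over u ∈ H¹_a(-1,1) with ‖u‖_{H¹_a} ≤ R of ∫_{-1}^{1-h} |u(x+h) - u(x)|² dx tends to 0 as h → 0⁺, with the explicit bound ∫_{-1}^{1-h} |u(x+h)-u(x)|² dx ≤ R² [∫_{1-h}^{1} A(x) dx − ∫_{-1}^{-1+h} A(x) dx]. -/

import Mathlib

open MeasureTheory Set Real

lemma utep_pointwise
    (a : ℝ → ℝ) (ha : ContDiffOn ℝ 1 a (Icc (-1) 1))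
    (hapos : ∀ x ∈ Ioo (-1:ℝ) 1, 0 < a x)
    (A : ℝ → ℝ) (hA : ∀ x, A x = ∫ s in (0:ℝ)..x, 1 / a s)
    (h : ℝ) (hh : 0 < h)
    (u u' : ℝ → ℝ)
    (hderiv : ∀ x ∈ Ioo (-1:ℝ) 1, HasDerivAt u (u' x) x)
    (hmem : MemLp (fun x => Real.sqrt (a x) * u' x) 2 (volume.restrict (Ioo (-1) 1)))
    (x : ℝ) (hx : x ∈ Ioo (-1:ℝ) (1 - h)) :
    (u (x + h) - u x) ^ 2 ≤
      (∫ t in Ioo (-1:ℝ) 1, a t * u' t ^ 2) * (A (x + h) - A x) ∧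
      0 ≤ A (x + h) - A x := by
  have hx1 : (-1:ℝ) < x := hx.1
  have hxh1 : x + h < 1 := by linarith [hx.2]
  have hle : x ≤ x + h := by linarith
  set S := Ioc x (x + h) with hS
  have hsub : Icc x (x + h) ⊆ Ioo (-1:ℝ) 1 :=
    fun t ht => ⟨lt_of_lt_of_le hx1 ht.1, lt_of_le_of_lt ht.2 hxh1⟩
  have hSsub : S ⊆ Ioo (-1:ℝ) 1 := Ioc_subset_Icc_self.trans hsub
  have haC : ContinuousOn a (Icc x (x + h)) :=
    ha.continuousOn.mono (hsub.trans Ioo_subset_Icc_self)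
  have hapos' : ∀ t ∈ Icc x (x + h), 0 < a t := fun t ht => hapos t (hsub ht)
  set f : ℝ → ℝ := fun t => Real.sqrt (a t) * u' t with hf
  set g : ℝ → ℝ := fun t => (Real.sqrt (a t))⁻¹ with hg
  have hsqrtC : ContinuousOn (fun t => Real.sqrt (a t)) (Icc x (x + h)) :=
    Real.continuous_sqrt.comp_continuousOn haC
  have hgC : ContinuousOn g (Icc x (x + h)) :=
    hsqrtC.inv₀ fun t ht => (Real.sqrt_pos.2 (hapos' t ht)).ne'
  obtain ⟨M, hM⟩ := (isCompact_Icc (a := x) (b := x + h)).exists_bound_of_continuousOn hgC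
  haveI : Fact (volume S < ⊤) := ⟨measure_Ioc_lt_top⟩
  have hfL2 : MemLp f 2 (volume.restrict S) :=
    hmem.mono_measure (Measure.restrict_mono hSsub le_rfl)
  have hfL1 : Integrable f (volume.restrict S) := hfL2.integrable one_le_two
  have hgmeas : AEStronglyMeasurable g (volume.restrict S) :=
    (hgC.mono Ioc_subset_Icc_self).aestronglyMeasurable measurableSet_Ioc
  have hgL2 : MemLp g 2 (volume.restrict S) :=
    MemLp.of_bound hgmeas M <| (ae_restrict_iff' measurableSet_Ioc).2 <|
      Filter.Eventually.of_forall fun t ht => hM t (Ioc_subset_Icc_self ht)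
  have hu'eq : ∀ t ∈ S, u' t = f t * g t := by
    intro t ht
    have h0 : (0:ℝ) < Real.sqrt (a t) := Real.sqrt_pos.2 (hapos t (hSsub ht))
    simp only [hf, hg]
    rw [mul_comm (√(a t)) (u' t), mul_assoc, mul_inv_cancel₀ h0.ne', mul_one]
  have hu'meas : AEStronglyMeasurable u' (volume.restrict S) := by
    refine (hfL2.1.mul hgmeas).congr ?_
    exact (ae_restrict_iff' measurableSet_Ioc).2 <|
      Filter.Eventually.of_forall fun t ht => (hu'eq t ht).symm
  have hbound : ∀ᵐ t ∂volume.restrict S, ‖u' t‖ ≤ M * ‖f t‖ := by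
    refine (ae_restrict_iff' measurableSet_Ioc).2 <| Filter.Eventually.of_forall fun t ht => ?_
    rw [hu'eq t ht, norm_mul, mul_comm]
    exact mul_le_mul_of_nonneg_right (hM t (Ioc_subset_Icc_self ht)) (norm_nonneg _)
  have hInt_u' : IntegrableOn u' S := (hfL1.norm.const_mul M).mono' hu'meas hbound
  have hFTC : ∫ t in x..(x + h), u' t = u (x + h) - u x := by
    refine intervalIntegral.integral_eq_sub_of_hasDerivAt (fun t ht => ?_) ?_
    · exact hderiv t (hsub (by rwa [uIcc_of_le hle] at ht))
    · exact (intervalIntegrable_iff_integrableOn_Ioc_of_le hle).2 hInt_u'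
  -- Cauchy-Schwarz
  have hpq : Real.HolderConjugate 2 2 := Real.HolderConjugate.two_two
  have h2 : ENNReal.ofReal (2:ℝ) = 2 := by norm_num
  have hCS := MeasureTheory.integral_mul_norm_le_Lp_mul_Lq (μ := volume.restrict S) hpq
    (h2 ▸ hfL2) (h2 ▸ hgL2)
  set P := ∫ t in S, a t * u' t ^ 2 with hP
  set Q := ∫ t in S, 1 / a t with hQ
  have hfsq : ∀ t ∈ S, ‖f t‖ ^ (2:ℝ) = a t * u' t ^ 2 := by
    intro t ht
    have h0 : 0 ≤ a t := (hapos t (hSsub ht)).le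
    rw [show (2:ℝ) = ((2:ℕ):ℝ) by norm_num, Real.rpow_natCast, Real.norm_eq_abs, sq_abs,
      hf, mul_pow, Real.sq_sqrt h0]
  have hgsq : ∀ t ∈ S, ‖g t‖ ^ (2:ℝ) = 1 / a t := by
    intro t ht
    have h0 : 0 < a t := hapos t (hSsub ht)
    rw [show (2:ℝ) = ((2:ℕ):ℝ) by norm_num, Real.rpow_natCast, Real.norm_eq_abs, sq_abs,
      hg, inv_pow, Real.sq_sqrt h0.le, one_div]
  have hfint : ∫ t in S, ‖f t‖ ^ (2:ℝ) = P :=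
    setIntegral_congr_fun measurableSet_Ioc hfsq
  have hgint : ∫ t in S, ‖g t‖ ^ (2:ℝ) = Q :=
    setIntegral_congr_fun measurableSet_Ioc hgsq
  have hPnn : 0 ≤ P := setIntegral_nonneg measurableSet_Ioc fun t ht =>
    mul_nonneg (hapos t (hSsub ht)).le (sq_nonneg _)
  have hQnn : 0 ≤ Q := setIntegral_nonneg measurableSet_Ioc fun t ht => by
    have := hapos t (hSsub ht); positivity
  rw [hfint, hgint] at hCS
  have habs : |∫ t in S, u' t| ≤ ∫ t in S, ‖f t‖ * ‖g t‖ := by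
    calc |∫ t in S, u' t| ≤ ∫ t in S, ‖u' t‖ := by
          rw [← Real.norm_eq_abs]; exact norm_integral_le_integral_norm _
      _ = ∫ t in S, ‖f t‖ * ‖g t‖ := setIntegral_congr_fun measurableSet_Ioc
          (fun t ht => by rw [hu'eq t ht, norm_mul])
  have hsq : (∫ t in S, u' t) ^ 2 ≤ P * Q := by
    calc (∫ t in S, u' t) ^ 2 = |∫ t in S, u' t| ^ 2 := (sq_abs _).symm
      _ ≤ (P ^ ((1:ℝ)/2) * Q ^ ((1:ℝ)/2)) ^ 2 :=
          pow_le_pow_left₀ (abs_nonneg _) (habs.trans hCS) 2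
      _ = P * Q := by
          rw [mul_pow, ← Real.rpow_natCast (P ^ ((1:ℝ)/2)) 2,
            ← Real.rpow_natCast (Q ^ ((1:ℝ)/2)) 2, ← Real.rpow_mul hPnn, ← Real.rpow_mul hQnn]
          norm_num
  have hii : ∀ w ∈ Ioo (-1:ℝ) 1, IntervalIntegrable (fun t => 1 / a t) volume 0 w := by
    intro w hw
    have hu : uIcc (0:ℝ) w ⊆ Ioo (-1:ℝ) 1 :=
      Set.ordConnected_Ioo.uIcc_subset ⟨by norm_num, by norm_num⟩ hw
    exact (continuousOn_const.div (ha.continuousOn.mono (hu.trans Ioo_subset_Icc_self))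
      (fun t ht => (hapos t (hu ht)).ne')).intervalIntegrable
  have hxmem : x ∈ Ioo (-1:ℝ) 1 := ⟨hx1, by linarith⟩
  have hxhmem : x + h ∈ Ioo (-1:ℝ) 1 := ⟨by linarith, hxh1⟩
  have key : A (x + h) - A x = Q := by
    rw [hA, hA, intervalIntegral.integral_interval_sub_left (hii _ hxhmem) (hii _ hxmem),
      intervalIntegral.integral_of_le hle]
  have hKint : IntegrableOn (fun t => a t * u' t ^ 2) (Ioo (-1:ℝ) 1) := by
    refine hmem.integrable_sq.congr ((ae_restrict_iff' measurableSet_Ioo).2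
      (Filter.Eventually.of_forall fun t ht => ?_))
    simp only [hf]
    rw [mul_pow, Real.sq_sqrt (hapos t ht).le]
  have hPK : P ≤ ∫ t in Ioo (-1:ℝ) 1, a t * u' t ^ 2 := by
    refine setIntegral_mono_set hKint ?_ (HasSubset.Subset.eventuallyLE hSsub)
    exact (ae_restrict_iff' measurableSet_Ioo).2 (Filter.Eventually.of_forall fun t ht => by
      simpa using mul_nonneg (hapos t ht).le (sq_nonneg (u' t)))
  refine ⟨?_, key ▸ hQnn⟩
  calc (u (x + h) - u x) ^ 2 = (∫ t in x..(x + h), u' t) ^ 2 := by rw [hFTC]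
    _ = (∫ t in S, u' t) ^ 2 := by rw [intervalIntegral.integral_of_le hle]
    _ ≤ P * Q := hsq
    _ ≤ (∫ t in Ioo (-1:ℝ) 1, a t * u' t ^ 2) * Q := mul_le_mul_of_nonneg_right hPK hQnn
    _ = _ := by rw [key]

/-- Uniform L² equicontinuity of translations in H¹_a(-1,1), with the explicit bound
    ∫_{-1}^{1-h}|u(x+h)-u(x)|² dx ≤ R²[∫_{1-h}^1 A − ∫_{-1}^{-1+h} A], and the resulting
    uniform convergence to 0 of the sup over the ball of radius R as h → 0⁺. -/
theorem uniform_translation_equicontinuity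
    (a : ℝ → ℝ) (ha : ContDiffOn ℝ 1 a (Icc (-1) 1))
    (hapos : ∀ x ∈ Ioo (-1:ℝ) 1, 0 < a x)
    (ha1 : a (-1) = 0) (ha2 : a 1 = 0)
    (A : ℝ → ℝ) (hA : ∀ x, A x = ∫ s in (0:ℝ)..x, 1 / a s)
    (hAint : IntegrableOn A (Ioo (-1) 1))
    (R : ℝ) (hR : 0 < R) :
    (∀ h : ℝ, 0 < h → h < 2 →
      ∀ (u u' : ℝ → ℝ),
        (∀ x ∈ Ioo (-1:ℝ) 1, HasDerivAt u (u' x) x) →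
        MemLp u 2 (volume.restrict (Ioo (-1) 1)) →
        MemLp (fun x => Real.sqrt (a x) * u' x) 2 (volume.restrict (Ioo (-1) 1)) →
        (∫ x in Ioo (-1:ℝ) 1, u x ^ 2) + (∫ x in Ioo (-1:ℝ) 1, a x * u' x ^ 2) ≤ R ^ 2 →
        ∫ x in Ioo (-1:ℝ) (1 - h), (u (x + h) - u x) ^ 2 ≤
          R ^ 2 * ((∫ x in Ioo (1 - h) 1, A x) - ∫ x in Ioo (-1:ℝ) (-1 + h), A x))
    ∧
    (∀ ε > 0, ∃ δ > 0, ∀ h : ℝ, 0 < h → h < δ →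
      ∀ (u u' : ℝ → ℝ),
        (∀ x ∈ Ioo (-1:ℝ) 1, HasDerivAt u (u' x) x) →
        MemLp u 2 (volume.restrict (Ioo (-1) 1)) →
        MemLp (fun x => Real.sqrt (a x) * u' x) 2 (volume.restrict (Ioo (-1) 1)) →
        (∫ x in Ioo (-1:ℝ) 1, u x ^ 2) + (∫ x in Ioo (-1:ℝ) 1, a x * u' x ^ 2) ≤ R ^ 2 →
        ∫ x in Ioo (-1:ℝ) (1 - h), (u (x + h) - u x) ^ 2 ≤ ε) := by
  have hAIcc : IntegrableOn A (Icc (-1:ℝ) 1) := by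
    rwa [IntegrableOn, Measure.restrict_congr_set Ioo_ae_eq_Icc] at hAint
  have hAII : ∀ p q : ℝ, p ∈ Icc (-1:ℝ) 1 → q ∈ Icc (-1:ℝ) 1 →
      IntervalIntegrable A volume p q := by
    intro p q hp hq
    rw [intervalIntegrable_iff]
    exact hAIcc.mono_set (Set.uIoc_subset_uIcc.trans (Set.ordConnected_Icc.uIcc_subset hp hq))
  have hBIcc : IntegrableOn (fun t => |A t|) (Icc (-1:ℝ) 1) := hAIcc.abs
  have hBII : ∀ p q : ℝ, p ∈ Icc (-1:ℝ) 1 → q ∈ Icc (-1:ℝ) 1 →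
      IntervalIntegrable (fun t => |A t|) volume p q := by
    intro p q hp hq
    rw [intervalIntegrable_iff]
    exact hBIcc.mono_set (Set.uIoc_subset_uIcc.trans (Set.ordConnected_Icc.uIcc_subset hp hq))
  have main : ∀ h : ℝ, 0 < h → h < 2 →
      ∀ (u u' : ℝ → ℝ),
        (∀ x ∈ Ioo (-1:ℝ) 1, HasDerivAt u (u' x) x) →
        MemLp u 2 (volume.restrict (Ioo (-1) 1)) →
        MemLp (fun x => Real.sqrt (a x) * u' x) 2 (volume.restrict (Ioo (-1) 1)) →
        (∫ x in Ioo (-1:ℝ) 1, u x ^ 2) + (∫ x in Ioo (-1:ℝ) 1, a x * u' x ^ 2) ≤ R ^ 2 →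
        ∫ x in Ioo (-1:ℝ) (1 - h), (u (x + h) - u x) ^ 2 ≤
          R ^ 2 * ((∫ x in Ioo (1 - h) 1, A x) - ∫ x in Ioo (-1:ℝ) (-1 + h), A x) := by
    intro h hh hh2 u u' hderiv hu hmem hbound
    have hle1 : (-1:ℝ) ≤ 1 - h := by linarith
    have hKnn : 0 ≤ ∫ t in Ioo (-1:ℝ) 1, a t * u' t ^ 2 :=
      setIntegral_nonneg measurableSet_Ioo fun t ht => mul_nonneg (hapos t ht).le (sq_nonneg _)
    have hKR : (∫ t in Ioo (-1:ℝ) 1, a t * u' t ^ 2) ≤ R ^ 2 := by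
      have h1 : 0 ≤ ∫ x in Ioo (-1:ℝ) 1, u x ^ 2 :=
        setIntegral_nonneg measurableSet_Ioo fun t ht => sq_nonneg _
      linarith
    have hpt := fun x hx => utep_pointwise a ha hapos A hA h hh u u' hderiv hmem x hx
    have hptR : ∀ x ∈ Ioo (-1:ℝ) (1 - h),
        (u (x + h) - u x) ^ 2 ≤ R ^ 2 * (A (x + h) - A x) := fun x hx =>
      (hpt x hx).1.trans (mul_le_mul_of_nonneg_right hKR (hpt x hx).2)
    have hA1 : IntervalIntegrable A volume (-1 + h) 1 :=
      hAII _ _ ⟨by linarith, by linarith⟩ ⟨by linarith, le_rfl⟩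
    have hA2 : IntervalIntegrable A volume (-1) (1 - h) :=
      hAII _ _ ⟨le_rfl, by linarith⟩ ⟨by linarith, by linarith⟩
    have hA3 : IntervalIntegrable (fun x => A (x + h)) volume (-1) (1 - h) := by
      have := hA1.comp_add_right h
      have e1 : (-1:ℝ) + h - h = -1 := by ring
      have e2 : (1:ℝ) - h = 1 - h := rfl
      rwa [e1] at this
    have hΔint : IntegrableOn (fun x => A (x + h) - A x) (Ioo (-1:ℝ) (1 - h)) := by
      have := hA3.sub hA2
      rw [intervalIntegrable_iff_integrableOn_Ioc_of_le hle1] at this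
      exact this.mono_set Ioo_subset_Ioc_self
    have hFc : ContinuousOn (fun x => (u (x + h) - u x) ^ 2) (Ioo (-1:ℝ) (1 - h)) := by
      intro x hx
      have hadd : ContinuousAt (fun y : ℝ => y + h) x := continuousAt_id.add continuousAt_const
      have h1 : ContinuousAt (fun y => u (y + h)) x := by
        have := ContinuousAt.comp (g := u) (f := fun y : ℝ => y + h)
          ((hderiv (x + h) ⟨by linarith [hx.1], by linarith [hx.2]⟩).continuousAt) hadd
        exact this
      have h2 : ContinuousAt u x := (hderiv x ⟨hx.1, by linarith [hx.2]⟩).continuousAt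
      exact ((h1.sub h2).pow 2).continuousWithinAt
    have hFint : IntegrableOn (fun x => (u (x + h) - u x) ^ 2) (Ioo (-1:ℝ) (1 - h)) := by
      refine Integrable.mono' (hΔint.const_mul (R ^ 2))
        (hFc.aestronglyMeasurable measurableSet_Ioo)
        ((ae_restrict_iff' measurableSet_Ioo).2 (Filter.Eventually.of_forall fun x hx => ?_))
      rw [Real.norm_eq_abs, abs_of_nonneg (sq_nonneg _)]
      exact hptR x hx
    have hmono : ∫ x in Ioo (-1:ℝ) (1 - h), (u (x + h) - u x) ^ 2 ≤
        ∫ x in Ioo (-1:ℝ) (1 - h), R ^ 2 * (A (x + h) - A x) :=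
      setIntegral_mono_on hFint (hΔint.const_mul _) measurableSet_Ioo hptR
    have hid : ∫ x in Ioo (-1:ℝ) (1 - h), R ^ 2 * (A (x + h) - A x) =
        R ^ 2 * ((∫ x in Ioo (1 - h) 1, A x) - ∫ x in Ioo (-1:ℝ) (-1 + h), A x) := by
      rw [MeasureTheory.integral_const_mul]
      congr 1
      have e1 : ∫ x in Ioo (-1:ℝ) (1 - h), (A (x + h) - A x) =
          (∫ x in (-1:ℝ)..(1 - h), A (x + h)) - ∫ x in (-1:ℝ)..(1 - h), A x := by
        rw [← intervalIntegral.integral_sub hA3 hA2, intervalIntegral.integral_of_le hle1,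
          integral_Ioc_eq_integral_Ioo]
      have e2 : ∫ x in (-1:ℝ)..(1 - h), A (x + h) = ∫ x in (-1 + h)..1, A x := by
        rw [intervalIntegral.integral_comp_add_right]
        norm_num
      have hT1 : (∫ x in (-1:ℝ)..(-1 + h), A x) + ∫ x in (-1 + h)..1, A x =
          ∫ x in (-1:ℝ)..1, A x :=
        intervalIntegral.integral_add_adjacent_intervals
          (hAII _ _ ⟨le_rfl, by norm_num⟩ ⟨by linarith, by linarith⟩) hA1
      have hT2 : (∫ x in (-1:ℝ)..(1 - h), A x) + ∫ x in (1 - h)..1, A x =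
          ∫ x in (-1:ℝ)..1, A x :=
        intervalIntegral.integral_add_adjacent_intervals hA2
          (hAII _ _ ⟨by linarith, by linarith⟩ ⟨by norm_num, le_rfl⟩)
      have e3 : ∫ x in Ioo (1 - h) 1, A x = ∫ x in (1 - h)..1, A x := by
        rw [intervalIntegral.integral_of_le (by linarith), integral_Ioc_eq_integral_Ioo]
      have e4 : ∫ x in Ioo (-1:ℝ) (-1 + h), A x = ∫ x in (-1:ℝ)..(-1 + h), A x := by
        rw [intervalIntegral.integral_of_le (by linarith), integral_Ioc_eq_integral_Ioo]
      rw [e1, e2, e3, e4]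
      linarith
    exact hmono.trans hid.le
  refine ⟨main, ?_⟩
  intro ε hε
  set G : ℝ → ℝ := fun t => ∫ s in (-1:ℝ)..t, |A s| with hG
  have hGc : ContinuousOn G (uIcc (-1:ℝ) 1) := by
    apply intervalIntegral.continuousOn_primitive_interval
    rw [uIcc_of_le (by norm_num : (-1:ℝ) ≤ 1)]
    exact hBIcc
  set φ : ℝ → ℝ := fun h => G 1 - G (1 - h) + G (-1 + h) with hφ
  have hφc : ContinuousOn φ (Icc (0:ℝ) 1) := by
    have hm1 : MapsTo (fun h : ℝ => 1 - h) (Icc (0:ℝ) 1) (uIcc (-1:ℝ) 1) := by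
      intro t ht
      rw [uIcc_of_le (by norm_num : (-1:ℝ) ≤ 1), mem_Icc]
      show (-1:ℝ) ≤ 1 - t ∧ 1 - t ≤ 1
      constructor <;> linarith [ht.1, ht.2]
    have hm2 : MapsTo (fun h : ℝ => -1 + h) (Icc (0:ℝ) 1) (uIcc (-1:ℝ) 1) := by
      intro t ht
      rw [uIcc_of_le (by norm_num : (-1:ℝ) ≤ 1), mem_Icc]
      show (-1:ℝ) ≤ -1 + t ∧ -1 + t ≤ 1
      constructor <;> linarith [ht.1, ht.2]
    exact (continuousOn_const.sub
        (hGc.comp ((continuous_const.sub continuous_id).continuousOn) hm1)).add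
      (hGc.comp ((continuous_const.add continuous_id).continuousOn) hm2)
  have hφ0 : φ 0 = 0 := by
    simp only [hφ, hG]
    norm_num
  have htend : Filter.Tendsto φ (nhdsWithin 0 (Icc (0:ℝ) 1)) (nhds 0) := by
    have := hφc 0 ⟨le_rfl, by norm_num⟩
    rwa [ContinuousWithinAt, hφ0] at this
  have hR2 : (0:ℝ) < R ^ 2 := pow_pos hR 2
  obtain ⟨δ₀, hδ₀, hδ⟩ := Metric.tendsto_nhdsWithin_nhds.1 htend (ε / R ^ 2) (by positivity)
  refine ⟨min δ₀ 1, by positivity, ?_⟩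
  intro h hh hhδ u u' hderiv hu hmem hbound
  have hh1 : h ≤ 1 := le_of_lt (lt_of_lt_of_le hhδ (min_le_right _ _))
  have hhδ0 : h < δ₀ := lt_of_lt_of_le hhδ (min_le_left _ _)
  have hφlt : |φ h| < ε / R ^ 2 := by
    have := hδ ⟨hh.le, hh1⟩ (by rwa [Real.dist_eq, sub_zero, abs_of_pos hh])
    rwa [Real.dist_eq, sub_zero] at this
  -- bracket ≤ φ h
  have hin1 : (1 - h) ∈ Icc (-1:ℝ) 1 := ⟨by linarith, by linarith⟩
  have hin2 : (-1 + h) ∈ Icc (-1:ℝ) 1 := ⟨by linarith, by linarith⟩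
  have hb1 : (∫ x in Ioo (1 - h) 1, A x) ≤ G 1 - G (1 - h) := by
    have habs : |∫ x in (1 - h)..1, A x| ≤ ∫ x in (1 - h)..1, |A x| :=
      intervalIntegral.abs_integral_le_integral_abs (by linarith)
    have hGdiff : G 1 - G (1 - h) = ∫ x in (1 - h)..1, |A x| :=
      intervalIntegral.integral_interval_sub_left
        (hBII _ _ ⟨le_rfl, by norm_num⟩ ⟨by norm_num, le_rfl⟩)
        (hBII _ _ ⟨le_rfl, by norm_num⟩ hin1)
    calc ∫ x in Ioo (1 - h) 1, A x ≤ |∫ x in Ioo (1 - h) 1, A x| := le_abs_self _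
      _ ≤ ∫ x in (1-h)..1, |A x| := by
          rwa [intervalIntegral.integral_of_le (by linarith : 1 - h ≤ 1),
            integral_Ioc_eq_integral_Ioo] at habs
      _ = G 1 - G (1 - h) := hGdiff.symm
  have hb2 : -(∫ x in Ioo (-1:ℝ) (-1 + h), A x) ≤ G (-1 + h) := by
    have habs : |∫ x in (-1:ℝ)..(-1 + h), A x| ≤ ∫ x in (-1:ℝ)..(-1 + h), |A x| :=
      intervalIntegral.abs_integral_le_integral_abs (by linarith)
    calc -(∫ x in Ioo (-1:ℝ) (-1 + h), A x) ≤ |∫ x in Ioo (-1:ℝ) (-1 + h), A x| :=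
          neg_le_abs _
      _ = |∫ x in (-1:ℝ)..(-1 + h), A x| := by
          rw [intervalIntegral.integral_of_le (by linarith : (-1:ℝ) ≤ -1 + h),
            integral_Ioc_eq_integral_Ioo]
      _ ≤ ∫ x in (-1:ℝ)..(-1 + h), |A x| := habs
      _ = G (-1 + h) := rfl
  have hbr : (∫ x in Ioo (1 - h) 1, A x) - (∫ x in Ioo (-1:ℝ) (-1 + h), A x) ≤ φ h := by
    simp only [hφ]; linarith
  have hkey := main h hh (by linarith) u u' hderiv hu hmem hbound
  have hfin : R ^ 2 * ((∫ x in Ioo (1 - h) 1, A x) - ∫ x in Ioo (-1:ℝ) (-1 + h), A x) ≤ ε := by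
    have h1 : R ^ 2 * ((∫ x in Ioo (1 - h) 1, A x) - ∫ x in Ioo (-1:ℝ) (-1 + h), A x) ≤
        R ^ 2 * φ h := mul_le_mul_of_nonneg_left hbr hR2.le
    have h2 : R ^ 2 * φ h ≤ R ^ 2 * |φ h| :=
      mul_le_mul_of_nonneg_left (le_abs_self _) hR2.le
    have h3 : R ^ 2 * |φ h| < R ^ 2 * (ε / R ^ 2) := by
      exact mul_lt_mul_of_pos_left hφlt hR2
    have h4 : R ^ 2 * (ε / R ^ 2) = ε := by field_simp
    linarith
  exact hkey.trans hfin
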